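/- arXiv:1402.1698 — 2 statements merged into one kernel-verified Lean document; each statement's English description precedes it below -/
import Mathlib

section
/- The mean jump rate function Φ = R^{-1} is Lipschitz continuous on [0, ρ_c) with Lipschitz constant at most ‖g'‖_∞, i.e. |Φ(ρ₁) − Φ(ρ₂)| ≤ ‖g'‖_∞ |ρ₁ − ρ₂| for all ρ₁, ρ₂ ∈ [0, ρ_c). -/
open ENNReal


lemma chebENN (a b f : ℕ → ℝ≥0∞) (hf : Monotone f)
    (hab : ∀ j k, j ≤ k → a k * b j ≤ a j * b k) :
    (∑' k, f k * a k) * (∑' k, b k) ≤ (∑' k, f k * b k) * (∑' k, a k) := by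
  -- pointwise key inequality
  have key : ∀ j k : ℕ, j ≤ k →
      f j * a j * b k + f k * (a k * b j) ≤ f j * (a k * b j) + f k * (a j * b k) := by
    intro j k hjk
    have hY : a k * b j ≤ a j * b k := hab j k hjk
    have hX : (a j * b k - a k * b j) + a k * b j = a j * b k :=
      tsub_add_cancel_of_le hY
    calc f j * a j * b k + f k * (a k * b j)
        = f j * (a j * b k) + f k * (a k * b j) := by rw [mul_assoc]
      _ = f j * ((a j * b k - a k * b j) + a k * b j) + f k * (a k * b j) := by rw [hX]
      _ = f j * (a j * b k - a k * b j) + (f j * (a k * b j) + f k * (a k * b j)) := by ring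
      _ ≤ f k * (a j * b k - a k * b j) + (f j * (a k * b j) + f k * (a k * b j)) := by
          gcongr; exact hf hjk
      _ = f j * (a k * b j) + f k * ((a j * b k - a k * b j) + a k * b j) := by ring
      _ = f j * (a k * b j) + f k * (a j * b k) := by rw [hX]
  have keyp : ∀ p : ℕ × ℕ,
      f p.1 * a p.1 * b p.2 + f p.2 * a p.2 * b p.1 ≤
      f p.1 * b p.1 * a p.2 + f p.2 * b p.2 * a p.1 := by
    rintro ⟨j, k⟩
    rcases le_total j k with h | h
    · have := key j k h
      simp only []
      calc f j * a j * b k + f k * a k * b j = f j * a j * b k + f k * (a k * b j) := by ring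
        _ ≤ f j * (a k * b j) + f k * (a j * b k) := this
        _ = f j * b j * a k + f k * b k * a j := by ring
    · have := key k j h
      simp only []
      calc f j * a j * b k + f k * a k * b j = f k * a k * b j + f j * (a j * b k) := by ring
        _ ≤ f k * (a j * b k) + f j * (a k * b j) := this
        _ = f j * b j * a k + f k * b k * a j := by ring
  -- double sums
  have prod_eq : ∀ c d : ℕ → ℝ≥0∞,
      (∑' k, c k) * (∑' k, d k) = ∑' p : ℕ × ℕ, c p.1 * d p.2 := by
    intro c d
    rw [ENNReal.tsum_prod (f := fun i j => c i * d j)]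
    simp_rw [ENNReal.tsum_mul_left, ENNReal.tsum_mul_right]
  have swap1 : (∑' p : ℕ × ℕ, f p.1 * a p.1 * b p.2) =
      ∑' p : ℕ × ℕ, f p.2 * a p.2 * b p.1 := by
    simpa using ((Equiv.prodComm ℕ ℕ).tsum_eq fun p : ℕ × ℕ => f p.2 * a p.2 * b p.1)
  have swap2 : (∑' p : ℕ × ℕ, f p.1 * b p.1 * a p.2) =
      ∑' p : ℕ × ℕ, f p.2 * b p.2 * a p.1 := by
    simpa using ((Equiv.prodComm ℕ ℕ).tsum_eq fun p : ℕ × ℕ => f p.2 * b p.2 * a p.1)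
  have hdouble : (∑' p : ℕ × ℕ, f p.1 * a p.1 * b p.2) ≤
      ∑' p : ℕ × ℕ, f p.1 * b p.1 * a p.2 := by
    have h2 : (2 : ℝ≥0∞) * (∑' p : ℕ × ℕ, f p.1 * a p.1 * b p.2) ≤
        2 * ∑' p : ℕ × ℕ, f p.1 * b p.1 * a p.2 := by
      rw [two_mul, two_mul]
      nth_rewrite 2 [swap1]
      nth_rewrite 2 [swap2]
      rw [← ENNReal.tsum_add, ← ENNReal.tsum_add]
      exact ENNReal.tsum_le_tsum keyp
    exact (ENNReal.mul_le_mul_iff_right (by norm_num) (by norm_num)).mp h2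
  rw [prod_eq (fun k => f k * a k) b, prod_eq (fun k => f k * b k) a]
  exact hdouble

lemma chebReal (a b f : ℕ → ℝ) (ha0 : ∀ k, 0 ≤ a k) (hb0 : ∀ k, 0 ≤ b k)
    (hf0 : ∀ k, 0 ≤ f k) (hfmono : Monotone f)
    (hab : ∀ j k, j ≤ k → a k * b j ≤ a j * b k)
    (hsa : Summable a) (hsb : Summable b)
    (hsfa : Summable (fun k => f k * a k)) (hsfb : Summable (fun k => f k * b k)) :
    (∑' k, f k * a k) * (∑' k, b k) ≤ (∑' k, f k * b k) * (∑' k, a k) := by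
  have hfa0 : ∀ k, 0 ≤ f k * a k := fun k => mul_nonneg (hf0 k) (ha0 k)
  have hfb0 : ∀ k, 0 ≤ f k * b k := fun k => mul_nonneg (hf0 k) (hb0 k)
  have hta : 0 ≤ ∑' k, a k := tsum_nonneg ha0
  have htb : 0 ≤ ∑' k, b k := tsum_nonneg hb0
  have htfa : 0 ≤ ∑' k, f k * a k := tsum_nonneg hfa0
  have htfb : 0 ≤ ∑' k, f k * b k := tsum_nonneg hfb0
  rw [← ENNReal.ofReal_le_ofReal_iff (mul_nonneg htfb hta)]
  rw [ENNReal.ofReal_mul htfa, ENNReal.ofReal_mul htfb]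
  rw [ENNReal.ofReal_tsum_of_nonneg hfa0 hsfa, ENNReal.ofReal_tsum_of_nonneg hfb0 hsfb,
    ENNReal.ofReal_tsum_of_nonneg ha0 hsa, ENNReal.ofReal_tsum_of_nonneg hb0 hsb]
  have ea : ∀ k, ENNReal.ofReal (f k * a k) = ENNReal.ofReal (f k) * ENNReal.ofReal (a k) :=
    fun k => ENNReal.ofReal_mul (hf0 k)
  have eb : ∀ k, ENNReal.ofReal (f k * b k) = ENNReal.ofReal (f k) * ENNReal.ofReal (b k) :=
    fun k => ENNReal.ofReal_mul (hf0 k)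
  simp_rw [ea, eb]
  apply chebENN
  · exact fun i j hij => ENNReal.ofReal_le_ofReal (hfmono hij)
  · intro j k hjk
    rw [← ENNReal.ofReal_mul (ha0 k), ← ENNReal.ofReal_mul (ha0 j)]
    exact ENNReal.ofReal_le_ofReal (hab j k hjk)


-- summability of k * φ^k / G k
lemma sumK (φ phic : ℝ) (G : ℕ → ℝ) (hG : ∀ k, 0 < G k) (hφ0 : 0 ≤ φ) (hφc : φ < phic)
    (hsum : ∀ ψ : ℝ, 0 ≤ ψ → ψ < phic → Summable (fun k : ℕ => ψ ^ k / G k)) :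
    Summable (fun k : ℕ => (k : ℝ) * (φ ^ k / G k)) := by
  set ψ := (φ + phic) / 2 with hψdef
  have hψφ : φ < ψ := by rw [hψdef]; linarith
  have hψc : ψ < phic := by rw [hψdef]; linarith
  have hψ0 : 0 < ψ := lt_of_le_of_lt hφ0 hψφ
  set r := φ / ψ with hrdef
  have hr0 : 0 ≤ r := div_nonneg hφ0 hψ0.le
  have hr1 : r < 1 := (div_lt_one hψ0).mpr hψφ
  have hrs : Summable (fun k : ℕ => (k : ℝ) * r ^ k) := by
    have := summable_pow_mul_geometric_of_norm_lt_one (R := ℝ) 1 (r := r)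
      (by rw [Real.norm_eq_abs, abs_of_nonneg hr0]; exact hr1)
    simpa using this
  set C := ∑' k : ℕ, (k : ℝ) * r ^ k with hC
  have hbound : ∀ k : ℕ, (k : ℝ) * r ^ k ≤ C := by
    intro k
    exact Summable.le_tsum hrs k (fun j _ => mul_nonneg (Nat.cast_nonneg j) (pow_nonneg hr0 j))
  have hφr : φ = r * ψ := by rw [hrdef, div_mul_cancel₀ _ hψ0.ne']
  refine Summable.of_nonneg_of_le ?_ ?_ ((hsum ψ hψ0.le hψc).mul_left C)
  · intro k
    exact mul_nonneg (Nat.cast_nonneg k) (div_nonneg (pow_nonneg hφ0 k) (hG k).le)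
  · intro k
    have h1 : (k : ℝ) * (φ ^ k / G k) = ((k : ℝ) * r ^ k) * (ψ ^ k / G k) := by
      rw [hφr, mul_pow]; field_simp
    rw [h1]
    apply mul_le_mul_of_nonneg_right (hbound k)
      (div_nonneg (pow_nonneg hψ0.le k) (hG k).le)

lemma core (g : ℕ → ℝ) (L : ℝ) (hg0 : g 0 = 0) (hg : ∀ k : ℕ, 0 < k → 0 < g k)
    (hL : ∀ k : ℕ, |g (k + 1) - g k| ≤ L)
    (gfact : ℕ → ℝ) (hgfact0 : gfact 0 = 1)
    (hgfact : ∀ k, gfact (k + 1) = gfact k * g (k + 1))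
    (phic : ℝ)
    (hsum : ∀ ψ : ℝ, 0 ≤ ψ → ψ < phic → Summable (fun k : ℕ => ψ ^ k / gfact k))
    (R : ℝ → ℝ)
    (hR : ∀ φ ∈ Set.Ico (0:ℝ) phic,
      R φ = ∑' k : ℕ, (k : ℝ) * ((φ ^ k / gfact k) / (∑' j : ℕ, φ ^ j / gfact j)))
    (φ₁ φ₂ : ℝ) (h1 : φ₁ ∈ Set.Ico (0:ℝ) phic) (h2 : φ₂ ∈ Set.Ico (0:ℝ) phic)
    (h12 : φ₁ ≤ φ₂) :
    φ₂ - φ₁ ≤ L * (R φ₂ - R φ₁) := by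
  obtain ⟨hφ1, hφ1c⟩ := h1
  obtain ⟨hφ2, hφ2c⟩ := h2
  have hφ2' : (0:ℝ) ≤ φ₂ := hφ2
  -- gfact positive
  have hG : ∀ k, 0 < gfact k := by
    intro k
    induction k with
    | zero => rw [hgfact0]; norm_num
    | succ n ih => rw [hgfact n]; exact mul_pos ih (hg (n+1) (Nat.succ_pos n))
  set a : ℕ → ℝ := fun k => φ₁ ^ k / gfact k with ha
  set b : ℕ → ℝ := fun k => φ₂ ^ k / gfact k with hb
  set f : ℕ → ℝ := fun k => L * k - g k with hf
  have ha0 : ∀ k, 0 ≤ a k := fun k => div_nonneg (pow_nonneg hφ1 k) (hG k).le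
  have hb0 : ∀ k, 0 ≤ b k := fun k => div_nonneg (pow_nonneg hφ2 k) (hG k).le
  have hsa : Summable a := hsum φ₁ hφ1 hφ1c
  have hsb : Summable b := hsum φ₂ hφ2 hφ2c
  have hka : Summable (fun k : ℕ => (k:ℝ) * a k) := sumK φ₁ phic gfact hG hφ1 hφ1c hsum
  have hkb : Summable (fun k : ℕ => (k:ℝ) * b k) := sumK φ₂ phic gfact hG hφ2 hφ2c hsum
  -- f is monotone and nonneg
  have hfmono : Monotone f := by
    apply monotone_nat_of_le_succ
    intro n
    have := hL n
    have h1 : g (n+1) - g n ≤ L := (abs_le.mp this).2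
    simp only [hf]
    push_cast
    linarith
  have hf0 : ∀ k, 0 ≤ f k := by
    intro k
    have : f 0 ≤ f k := hfmono (Nat.zero_le k)
    simp only [hf] at this ⊢
    rw [hg0] at this
    simpa using this
  -- shift identity for g * (φ^k/Gk)
  have shift : ∀ (φ : ℝ) (k : ℕ), g (k+1) * (φ ^ (k+1) / gfact (k+1)) = φ * (φ ^ k / gfact k) := by
    intro φ k
    rw [hgfact k, pow_succ]
    have hgk : g (k+1) ≠ 0 := (hg (k+1) (Nat.succ_pos k)).ne'
    field_simp [hgk, (hG k).ne']
  have hga_s : Summable (fun k => g k * a k) := by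
    rw [← summable_nat_add_iff 1]
    apply Summable.congr (hsa.mul_left φ₁)
    intro n
    exact (shift φ₁ n).symm
  have hgb_s : Summable (fun k => g k * b k) := by
    rw [← summable_nat_add_iff 1]
    apply Summable.congr (hsb.mul_left φ₂)
    intro n
    exact (shift φ₂ n).symm
  have hga_v : ∑' k : ℕ, g k * a k = φ₁ * ∑' k : ℕ, a k := by
    rw [Summable.tsum_eq_zero_add hga_s]
    simp only [hg0, zero_mul, zero_add]
    rw [← tsum_mul_left]
    exact tsum_congr (fun n => shift φ₁ n)
  have hgb_v : ∑' k : ℕ, g k * b k = φ₂ * ∑' k : ℕ, b k := by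
    rw [Summable.tsum_eq_zero_add hgb_s]
    simp only [hg0, zero_mul, zero_add]
    rw [← tsum_mul_left]
    exact tsum_congr (fun n => shift φ₂ n)
  -- summability of f * a, f * b
  have hfa_eq : ∀ k, f k * a k = L * ((k:ℝ) * a k) - g k * a k := by
    intro k; simp only [hf]; ring
  have hfb_eq : ∀ k, f k * b k = L * ((k:ℝ) * b k) - g k * b k := by
    intro k; simp only [hf]; ring
  have hsfa : Summable (fun k => f k * a k) := by
    apply Summable.congr ((hka.mul_left L).sub hga_s)
    intro n; exact (hfa_eq n).symm
  have hsfb : Summable (fun k => f k * b k) := by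
    apply Summable.congr ((hkb.mul_left L).sub hgb_s)
    intro n; exact (hfb_eq n).symm
  -- values
  have hFa : ∑' k : ℕ, f k * a k = L * (∑' k : ℕ, (k:ℝ) * a k) - φ₁ * ∑' k : ℕ, a k := by
    calc ∑' k : ℕ, f k * a k = ∑' k : ℕ, (L * ((k:ℝ) * a k) - g k * a k) := tsum_congr hfa_eq
      _ = (∑' k : ℕ, L * ((k:ℝ) * a k)) - ∑' k : ℕ, g k * a k := Summable.tsum_sub (hka.mul_left L) hga_s
      _ = L * (∑' k : ℕ, (k:ℝ) * a k) - φ₁ * ∑' k : ℕ, a k := by rw [tsum_mul_left, hga_v]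
  have hFb : ∑' k : ℕ, f k * b k = L * (∑' k : ℕ, (k:ℝ) * b k) - φ₂ * ∑' k : ℕ, b k := by
    calc ∑' k : ℕ, f k * b k = ∑' k : ℕ, (L * ((k:ℝ) * b k) - g k * b k) := tsum_congr hfb_eq
      _ = (∑' k : ℕ, L * ((k:ℝ) * b k)) - ∑' k : ℕ, g k * b k := Summable.tsum_sub (hkb.mul_left L) hgb_s
      _ = L * (∑' k : ℕ, (k:ℝ) * b k) - φ₂ * ∑' k : ℕ, b k := by rw [tsum_mul_left, hgb_v]
  -- likelihood ratio monotonicity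
  have hab : ∀ j k : ℕ, j ≤ k → a k * b j ≤ a j * b k := by
    intro j k hjk
    have hnum : φ₁ ^ k * φ₂ ^ j ≤ φ₁ ^ j * φ₂ ^ k := by
      obtain ⟨m, rfl⟩ := Nat.exists_eq_add_of_le hjk
      rw [pow_add, pow_add]
      have hm : φ₁ ^ m ≤ φ₂ ^ m := pow_le_pow_left₀ hφ1 h12 m
      calc φ₁ ^ j * φ₁ ^ m * φ₂ ^ j = (φ₁ ^ j * φ₂ ^ j) * φ₁ ^ m := by ring
        _ ≤ (φ₁ ^ j * φ₂ ^ j) * φ₂ ^ m := by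
            apply mul_le_mul_of_nonneg_left hm
            exact mul_nonneg (pow_nonneg hφ1 j) (pow_nonneg hφ2 j)
        _ = φ₁ ^ j * (φ₂ ^ j * φ₂ ^ m) := by ring
    simp only [ha, hb]
    rw [div_mul_div_comm, div_mul_div_comm, mul_comm (gfact k) (gfact j)]
    gcongr
    exact (_root_.mul_pos (hG j) (hG k)).le

  -- Chebyshev / correlation inequality
  have hcheb := chebReal a b f ha0 hb0 hf0 hfmono hab hsa hsb hsfa hsfb
  rw [hFa, hFb] at hcheb
  set A := ∑' k : ℕ, (k:ℝ) * a k with hA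
  set B := ∑' k : ℕ, (k:ℝ) * b k with hB
  set S1 := ∑' k : ℕ, a k with hS1d
  set S2 := ∑' k : ℕ, b k with hS2d
  have ha_zero : a 0 = 1 := by simp only [ha]; rw [hgfact0]; norm_num
  have hb_zero : b 0 = 1 := by simp only [hb]; rw [hgfact0]; norm_num
  have hS1 : (0:ℝ) < S1 := by
    have := Summable.le_tsum hsa 0 (fun j _ => ha0 j)
    rw [ha_zero] at this
    linarith
  have hS2 : (0:ℝ) < S2 := by
    have := Summable.le_tsum hsb 0 (fun j _ => hb0 j)
    rw [hb_zero] at this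
    linarith
  have hR1 : R φ₁ = A / S1 := by
    rw [hR φ₁ ⟨hφ1, hφ1c⟩]
    have e : ∀ k : ℕ, (k:ℝ) * ((φ₁ ^ k / gfact k) / (∑' j : ℕ, φ₁ ^ j / gfact j))
        = ((k:ℝ) * a k) / S1 := fun k => (mul_div_assoc _ _ _).symm
    rw [tsum_congr e, tsum_div_const]
  have hR2 : R φ₂ = B / S2 := by
    rw [hR φ₂ ⟨hφ2, hφ2c⟩]
    have e : ∀ k : ℕ, (k:ℝ) * ((φ₂ ^ k / gfact k) / (∑' j : ℕ, φ₂ ^ j / gfact j))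
        = ((k:ℝ) * b k) / S2 := fun k => (mul_div_assoc _ _ _).symm
    rw [tsum_congr e, tsum_div_const]
  rw [hR1, hR2]
  rw [div_sub_div _ _ hS2.ne' hS1.ne', ← mul_div_assoc,
    le_div_iff₀ (mul_pos hS2 hS1)]
  nlinarith [hcheb]

/-- The mean jump rate Φ = R⁻¹ is Lipschitz on [0,ρ_c) with constant ‖g'‖_∞. -/
theorem stmt5 (g : ℕ → ℝ) (L : ℝ) (hg0 : g 0 = 0) (hg : ∀ k : ℕ, 0 < k → 0 < g k)
    (hL : ∀ k : ℕ, |g (k + 1) - g k| ≤ L)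
    (gfact : ℕ → ℝ) (hgfact0 : gfact 0 = 1)
    (hgfact : ∀ k, gfact (k + 1) = gfact k * g (k + 1))
    (phic rhoc : ℝ)
    (hsum : ∀ ψ : ℝ, 0 ≤ ψ → ψ < phic → Summable (fun k : ℕ => ψ ^ k / gfact k))
    (R : ℝ → ℝ)
    (hR : ∀ φ ∈ Set.Ico (0:ℝ) phic,
      R φ = ∑' k : ℕ, (k : ℝ) * ((φ ^ k / gfact k) / (∑' j : ℕ, φ ^ j / gfact j)))
    (Φ : ℝ → ℝ)
    (hΦmem : ∀ ρ ∈ Set.Ico (0:ℝ) rhoc, Φ ρ ∈ Set.Ico 0 phic)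
    (hΦR : ∀ ρ ∈ Set.Ico (0:ℝ) rhoc, R (Φ ρ) = ρ) :
    ∀ ρ₁ ∈ Set.Ico (0:ℝ) rhoc, ∀ ρ₂ ∈ Set.Ico (0:ℝ) rhoc,
      |Φ ρ₁ - Φ ρ₂| ≤ L * |ρ₁ - ρ₂| := by
  have hL0 : (0:ℝ) ≤ L := le_trans (abs_nonneg _) (hL 0)
  have key : ∀ σ ∈ Set.Ico (0:ℝ) rhoc, ∀ τ ∈ Set.Ico (0:ℝ) rhoc, Φ σ ≤ Φ τ →
      Φ τ - Φ σ ≤ L * |σ - τ| := by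
    intro σ hσ τ hτ hle
    have h := core g L hg0 hg hL gfact hgfact0 hgfact phic hsum R hR (Φ σ) (Φ τ)
      (hΦmem σ hσ) (hΦmem τ hτ) hle
    rw [hΦR σ hσ, hΦR τ hτ] at h
    calc Φ τ - Φ σ ≤ L * (τ - σ) := h
      _ ≤ L * |σ - τ| := by
          apply mul_le_mul_of_nonneg_left _ hL0
          rw [abs_sub_comm]
          exact le_abs_self _
  intro ρ₁ hρ₁ ρ₂ hρ₂
  rcases le_total (Φ ρ₁) (Φ ρ₂) with h | h
  · rw [abs_sub_comm, abs_of_nonneg (sub_nonneg.mpr h)]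
    exact key ρ₁ hρ₁ ρ₂ hρ₂ h
  · rw [abs_of_nonneg (sub_nonneg.mpr h)]
    have := key ρ₂ hρ₂ ρ₁ hρ₁ h
    rwa [abs_sub_comm] at this
end

section
/- The Legendre transform Λ_ρ*(λ) := sup_{r∈ℝ} {λr − Λ_ρ(r)} of the logarithmic moment generating function Λ_ρ(r) = log(Z(e^r Φ(ρ))/Z(Φ(ρ))) of the zero-range one-site distribution ν¹_ρ is given for 0 ≤ λ < ρ_c by Λ_ρ*(λ) = λ log(Φ(λ)/Φ(ρ)) − log(Z(Φ(λ))/Z(Φ(ρ))), i.e. the supremum over r is attained at r = log(Φ(λ)/Φ(ρ)). -/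
/-- The Legendre transform of the log-moment generating function of the
one-site zero range distribution: the sup over r is attained at
r = log(Φ(λ)/Φ(ρ)) and equals λ log(Φ(λ)/Φ(ρ)) − log(Z(Φ(λ))/Z(Φ(ρ))). -/
theorem stmt10 (gfact : ℕ → ℝ) (hgfact : ∀ k, 0 < gfact k) (hgfact0 : gfact 0 = 1)
    (phic rhoc : ℝ) (hphic : 0 < phic)
    (hsum : ∀ ψ : ℝ, 0 ≤ ψ → ψ < phic → Summable (fun k : ℕ => ψ ^ k / gfact k))
    (Z : ℝ → ℝ) (hZ : ∀ ψ, Z ψ = ∑' k : ℕ, ψ ^ k / gfact k)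
    (Φ : ℝ → ℝ)
    (hΦmem : ∀ ρ ∈ Set.Ico (0:ℝ) rhoc, Φ ρ ∈ Set.Ico 0 phic)
    (hΦpos : ∀ ρ ∈ Set.Ioo (0:ℝ) rhoc, 0 < Φ ρ)
    (hΦR : ∀ lam ∈ Set.Ico (0:ℝ) rhoc,
      ∑' k : ℕ, (k : ℝ) * (Φ lam ^ k / gfact k) = lam * ∑' k : ℕ, Φ lam ^ k / gfact k)
    (ρ lam : ℝ) (hρ : ρ ∈ Set.Ioo 0 rhoc) (hlam : lam ∈ Set.Ioo 0 rhoc) :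
    (∀ r : ℝ, Real.exp r * Φ ρ < phic →
        lam * r - Real.log (Z (Real.exp r * Φ ρ) / Z (Φ ρ))
          ≤ lam * Real.log (Φ lam / Φ ρ) - Real.log (Z (Φ lam) / Z (Φ ρ))) ∧
    sSup {y : ℝ | ∃ r : ℝ, Real.exp r * Φ ρ < phic ∧
        y = lam * r - Real.log (Z (Real.exp r * Φ ρ) / Z (Φ ρ))}
      = lam * Real.log (Φ lam / Φ ρ) - Real.log (Z (Φ lam) / Z (Φ ρ)) := by
  obtain ⟨hρ0, hρc⟩ := hρ
  obtain ⟨hlam0, hlamc⟩ := hlam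
  have hρIco : ρ ∈ Set.Ico (0:ℝ) rhoc := ⟨hρ0.le, hρc⟩
  have hlamIco : lam ∈ Set.Ico (0:ℝ) rhoc := ⟨hlam0.le, hlamc⟩
  have hφρ : 0 < Φ ρ := hΦpos ρ ⟨hρ0, hρc⟩
  have hφρlt : Φ ρ < phic := (hΦmem ρ hρIco).2
  have hPL : 0 < Φ lam := hΦpos lam ⟨hlam0, hlamc⟩
  have hPLlt : Φ lam < phic := (hΦmem lam hlamIco).2
  have hZpos : ∀ ψ : ℝ, 0 ≤ ψ → ψ < phic → 0 < Z ψ := by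
    intro ψ h0 h1
    rw [hZ]
    have hs := hsum ψ h0 h1
    have h01 : ψ ^ 0 / gfact 0 ≤ ∑' k : ℕ, ψ ^ k / gfact k :=
      Summable.le_tsum hs 0 (fun j _ => div_nonneg (pow_nonneg h0 j) (hgfact j).le)
    simp [hgfact0] at h01
    linarith
  have hZPL := hZpos (Φ lam) hPL.le hPLlt
  have hZφρ := hZpos (Φ ρ) hφρ.le hφρlt
  have hmean : ∑' k : ℕ, (k:ℝ) * (Φ lam ^ k / gfact k) = lam * Z (Φ lam) := by
    rw [hZ]; exact hΦR lam hlamIco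
  have hsummean : Summable (fun k : ℕ => (k:ℝ) * (Φ lam ^ k / gfact k)) := by
    by_contra h
    rw [tsum_eq_zero_of_not_summable h] at hmean
    have : 0 < lam * Z (Φ lam) := mul_pos hlam0 hZPL
    linarith
  have core : ∀ ψ : ℝ, 0 < ψ → ψ < phic →
      Z (Φ lam) * (ψ / Φ lam) ^ lam ≤ Z ψ := by
    intro ψ hψ0 hψ1
    set c : ℝ := ψ / Φ lam with hc
    have hcpos : 0 < c := div_pos hψ0 hPL
    set L : ℝ := Real.log c with hL
    have hck : ∀ k : ℕ, c ^ k = Real.exp (L * k) := by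
      intro k
      rw [← Real.rpow_natCast c k, Real.rpow_def_of_pos hcpos]
    have hclam : c ^ lam = Real.exp (L * lam) := Real.rpow_def_of_pos hcpos lam
    have hψc : ψ = c * Φ lam := by
      rw [hc, div_mul_cancel₀ _ hPL.ne']
    have hpt : ∀ k : ℕ,
        (c ^ lam * (1 - lam * L)) * (Φ lam ^ k / gfact k)
          + (c ^ lam * L) * ((k:ℝ) * (Φ lam ^ k / gfact k))
          ≤ ψ ^ k / gfact k := by
      intro k
      have hak : 0 ≤ Φ lam ^ k / gfact k :=
        div_nonneg (pow_nonneg hPL.le k) (hgfact k).le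
      have hψk : ψ ^ k / gfact k = (Φ lam ^ k / gfact k) * c ^ k := by
        rw [hψc, mul_pow]; ring
      have h1 : c ^ lam * (1 + ((k:ℝ) - lam) * L) ≤ c ^ k := by
        have ht := Real.add_one_le_exp (((k:ℝ) - lam) * L)
        calc c ^ lam * (1 + ((k:ℝ) - lam) * L)
            = Real.exp (L * lam) * (((k:ℝ) - lam) * L + 1) := by rw [hclam]; ring
          _ ≤ Real.exp (L * lam) * Real.exp (((k:ℝ) - lam) * L) :=
              mul_le_mul_of_nonneg_left ht (Real.exp_pos _).le
          _ = Real.exp (L * k) := by rw [← Real.exp_add]; ring_nf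
          _ = c ^ k := (hck k).symm
      calc (c ^ lam * (1 - lam * L)) * (Φ lam ^ k / gfact k)
            + (c ^ lam * L) * ((k:ℝ) * (Φ lam ^ k / gfact k))
          = (Φ lam ^ k / gfact k) * (c ^ lam * (1 + ((k:ℝ) - lam) * L)) := by ring
        _ ≤ (Φ lam ^ k / gfact k) * c ^ k := mul_le_mul_of_nonneg_left h1 hak
        _ = ψ ^ k / gfact k := hψk.symm
    have hs1 : Summable (fun k : ℕ =>
        (c ^ lam * (1 - lam * L)) * (Φ lam ^ k / gfact k)) :=
      (hsum _ hPL.le hPLlt).mul_left _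
    have hs2 : Summable (fun k : ℕ =>
        (c ^ lam * L) * ((k:ℝ) * (Φ lam ^ k / gfact k))) :=
      hsummean.mul_left _
    have hs3 := hsum ψ hψ0.le hψ1
    have hts := Summable.tsum_le_tsum hpt (hs1.add hs2) hs3
    rw [Summable.tsum_add hs1 hs2, tsum_mul_left, tsum_mul_left, hmean,
      ← hZ (Φ lam), ← hZ ψ] at hts
    calc Z (Φ lam) * c ^ lam
        = (c ^ lam * (1 - lam * L)) * Z (Φ lam)
            + (c ^ lam * L) * (lam * Z (Φ lam)) := by ring
      _ ≤ Z ψ := hts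
  have key : ∀ r : ℝ, Real.exp r * Φ ρ < phic →
      lam * r - Real.log (Z (Real.exp r * Φ ρ) / Z (Φ ρ))
        ≤ lam * Real.log (Φ lam / Φ ρ) - Real.log (Z (Φ lam) / Z (Φ ρ)) := by
    intro r hr
    set ψ := Real.exp r * Φ ρ with hψdef
    have hψ0 : 0 < ψ := mul_pos (Real.exp_pos r) hφρ
    have hZψ := hZpos ψ hψ0.le hr
    have hcore := core ψ hψ0 hr
    have hrpos : (0:ℝ) < (ψ / Φ lam) ^ lam := Real.rpow_pos_of_pos (div_pos hψ0 hPL) lam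
    have hlog : Real.log (Z (Φ lam)) + lam * (Real.log ψ - Real.log (Φ lam))
        ≤ Real.log (Z ψ) := by
      have h1 : Real.log (Z (Φ lam) * (ψ / Φ lam) ^ lam) ≤ Real.log (Z ψ) :=
        Real.log_le_log (mul_pos hZPL hrpos) hcore
      rw [Real.log_mul hZPL.ne' hrpos.ne', Real.log_rpow (div_pos hψ0 hPL),
        Real.log_div hψ0.ne' hPL.ne'] at h1
      linarith
    have hlogψ : Real.log ψ = r + Real.log (Φ ρ) := by
      rw [hψdef, Real.log_mul (Real.exp_pos r).ne' hφρ.ne', Real.log_exp]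
    rw [Real.log_div hZψ.ne' hZφρ.ne', Real.log_div hZPL.ne' hZφρ.ne',
      Real.log_div hPL.ne' hφρ.ne']
    rw [hlogψ] at hlog
    nlinarith [hlog]
  refine ⟨key, ?_⟩
  have hexp : Real.exp (Real.log (Φ lam / Φ ρ)) * Φ ρ = Φ lam := by
    rw [Real.exp_log (div_pos hPL hφρ), div_mul_cancel₀ _ hφρ.ne']
  have hmem : lam * Real.log (Φ lam / Φ ρ) - Real.log (Z (Φ lam) / Z (Φ ρ)) ∈
      {y : ℝ | ∃ r : ℝ, Real.exp r * Φ ρ < phic ∧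
        y = lam * r - Real.log (Z (Real.exp r * Φ ρ) / Z (Φ ρ))} := by
    exact ⟨Real.log (Φ lam / Φ ρ), by rw [hexp]; exact hPLlt, by rw [hexp]⟩
  apply le_antisymm
  · exact csSup_le ⟨_, hmem⟩ (by rintro y ⟨r, hr, rfl⟩; exact key r hr)
  · exact le_csSup ⟨_, by rintro y ⟨r, hr, rfl⟩; exact key r hr⟩ hmem
end
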